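/- One-step consensus contraction for D-SGT: let X, U ∈ ℝ^{d×n}, let W ∈ ℝ^{n×n} be symmetric with W𝟙 = 𝟙 and ‖W − (1/n)𝟙𝟙ᵀ‖₂ ≤ ρ < 1, and let η ≥ 0. Then (i) for X⁺ := (X − ηU)W one has ‖X⁺ − X̄⁺‖² ≤ ((1+ρ)/2)·‖X − X̄‖² + η²·((1+ρ²)/(1−ρ²))·‖U − Ū‖²; and (ii) for any D ∈ ℝ^{d×n} and U⁺ := UW + D one has ‖U⁺ − Ū⁺‖² ≤ ((1+ρ)/2)·‖U − Ū‖² + ((1+ρ²)/(1−ρ²))·‖D‖². -/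

import Mathlib

open Finset

/-- **One-step consensus contraction for D-SGT.** Matrices in `ℝ^{d×n}` are encoded by
their columns in `EuclideanSpace ℝ (Fin d)`; the squared Frobenius norm of `A − Ā` is
`∑_i ‖a_i − ā‖²`, and the spectral-norm bound `‖W − (1/n)𝟙𝟙ᵀ‖₂ ≤ ρ` is stated
functionally.  (i) For `X⁺ := (X − ηU)W`,
`‖X⁺ − X̄⁺‖² ≤ ((1+ρ)/2)‖X − X̄‖² + η²((1+ρ²)/(1−ρ²))‖U − Ū‖²`; and
(ii) for any `D` and `U⁺ := UW + D`,
`‖U⁺ − Ū⁺‖² ≤ ((1+ρ)/2)‖U − Ū‖² + ((1+ρ²)/(1−ρ²))‖D‖²`. -/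
private lemma eucl_norm_sq {m : ℕ} (x : EuclideanSpace ℝ (Fin m)) :
    ‖x‖ ^ 2 = ∑ i, (x i) ^ 2 := by
  rw [EuclideanSpace.norm_eq, Real.sq_sqrt (by positivity)]
  simp [sq_abs]

private lemma pilp_sum_apply {ι : Type*} [Fintype ι] {m : ℕ}
    (f : ι → EuclideanSpace ℝ (Fin m)) (k : Fin m) :
    (∑ j, f j) k = ∑ j, f j k := by
  rw [WithLp.ofLp_sum, Finset.sum_apply]

private lemma contract {d n : ℕ} (hn : 0 < n) (W : Matrix (Fin n) (Fin n) ℝ)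
    (hWrow : ∀ i, ∑ j, W i j = 1)
    (ρ : ℝ) (hρ0 : 0 ≤ ρ)
    (hspec : ∀ a : EuclideanSpace ℝ (Fin n),
      ‖(show EuclideanSpace ℝ (Fin n) from
          WithLp.toLp 2 (fun i => (∑ j, W i j * a j) - (∑ j, a j) / n))‖ ≤ ρ * ‖a‖)
    (V : Fin n → EuclideanSpace ℝ (Fin d)) :
    ∑ i, ‖(∑ j, W i j • V j) - (n : ℝ)⁻¹ • ∑ j, V j‖ ^ 2
      ≤ ρ ^ 2 * ∑ i, ‖V i - (n : ℝ)⁻¹ • ∑ j, V j‖ ^ 2 := by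
  have hn' : (n : ℝ) ≠ 0 := Nat.cast_ne_zero.mpr hn.ne'
  simp only [eucl_norm_sq]
  have hL : ∀ (i : Fin n) (k : Fin d),
      ((∑ j, W i j • V j) - (n : ℝ)⁻¹ • ∑ j, V j) k
        = ∑ j, W i j * V j k - (n : ℝ)⁻¹ * ∑ j, V j k := by
    intro i k
    simp [PiLp.sub_apply, PiLp.smul_apply, pilp_sum_apply, smul_eq_mul]
  have hR : ∀ (i : Fin n) (k : Fin d),
      (V i - (n : ℝ)⁻¹ • ∑ j, V j) k = V i k - (n : ℝ)⁻¹ * ∑ j, V j k := by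
    intro i k
    simp [PiLp.sub_apply, PiLp.smul_apply, pilp_sum_apply, smul_eq_mul]
  simp only [hL, hR]
  have key : ∀ k : Fin d,
      ∑ i, (∑ j, W i j * V j k - (n : ℝ)⁻¹ * ∑ j, V j k) ^ 2
        ≤ ρ ^ 2 * ∑ i, (V i k - (n : ℝ)⁻¹ * ∑ j, V j k) ^ 2 := by
    intro k
    set c : ℝ := (n : ℝ)⁻¹ * ∑ j, V j k with hc
    set a : EuclideanSpace ℝ (Fin n) := WithLp.toLp 2 (fun j => V j k - c) with ha
    have hsum0 : ∑ j, a j = 0 := by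
      simp only [ha, PiLp.toLp_apply]
      rw [Finset.sum_sub_distrib, Finset.sum_const, card_univ, Fintype.card_fin,
        nsmul_eq_mul, hc]
      field_simp
      ring
    have hWa : ∀ i, (∑ j, W i j * a j) - (∑ j, a j) / n
        = ∑ j, W i j * V j k - c := by
      intro i
      rw [hsum0]
      simp only [ha, PiLp.toLp_apply, mul_sub]
      rw [Finset.sum_sub_distrib, ← Finset.sum_mul, hWrow, one_mul]
      ring
    have h := hspec a
    have hnn : 0 ≤ ρ * ‖a‖ := le_trans (norm_nonneg _) h
    have h2 : ‖(show EuclideanSpace ℝ (Fin n) from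
          WithLp.toLp 2 (fun i => (∑ j, W i j * a j) - (∑ j, a j) / n))‖ ^ 2 ≤ (ρ * ‖a‖) ^ 2 := by
      have := mul_le_mul h h (norm_nonneg _) hnn
      nlinarith [norm_nonneg (show EuclideanSpace ℝ (Fin n) from
          WithLp.toLp 2 (fun i => (∑ j, W i j * a j) - (∑ j, a j) / n))]
    rw [eucl_norm_sq] at h2
    calc ∑ i, (∑ j, W i j * V j k - c) ^ 2
        = ∑ i, ((show EuclideanSpace ℝ (Fin n) from
            WithLp.toLp 2 (fun i => (∑ j, W i j * a j) - (∑ j, a j) / n)) i) ^ 2 :=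
          Finset.sum_congr rfl fun i _ => by rw [show ((show EuclideanSpace ℝ (Fin n) from
            WithLp.toLp 2 (fun i => (∑ j, W i j * a j) - (∑ j, a j) / n)) i)
              = (∑ j, W i j * a j) - (∑ j, a j) / n from rfl, hWa i]
      _ ≤ (ρ * ‖a‖) ^ 2 := h2
      _ = ρ ^ 2 * ∑ i, (V i k - c) ^ 2 := by
          rw [mul_pow, eucl_norm_sq]
  calc ∑ i, ∑ k, (∑ j, W i j * V j k - (n : ℝ)⁻¹ * ∑ j, V j k) ^ 2
      = ∑ k, ∑ i, (∑ j, W i j * V j k - (n : ℝ)⁻¹ * ∑ j, V j k) ^ 2 :=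
        Finset.sum_comm
    _ ≤ ∑ k, ρ ^ 2 * ∑ i, (V i k - (n : ℝ)⁻¹ * ∑ j, V j k) ^ 2 :=
        Finset.sum_le_sum fun k _ => key k
    _ = ρ ^ 2 * ∑ k, ∑ i, (V i k - (n : ℝ)⁻¹ * ∑ j, V j k) ^ 2 := by
        rw [← Finset.mul_sum]
    _ = ρ ^ 2 * ∑ i, ∑ k, (V i k - (n : ℝ)⁻¹ * ∑ j, V j k) ^ 2 := by
        rw [Finset.sum_comm]

private lemma center_le {E : Type*} [NormedAddCommGroup E] [InnerProductSpace ℝ E]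
    {n : ℕ} (hn : 0 < n) (D : Fin n → E) :
    ∑ i, ‖D i - (n : ℝ)⁻¹ • ∑ j, D j‖ ^ 2 ≤ ∑ i, ‖D i‖ ^ 2 := by
  set m : E := (n : ℝ)⁻¹ • ∑ j, D j with hm
  have hsum : ∑ j, D j = (n : ℝ) • m := by
    rw [hm, smul_smul, mul_inv_cancel₀ (Nat.cast_ne_zero.mpr hn.ne'), one_smul]
  have h2 : (inner ℝ (∑ i, D i) m : ℝ) = n * ‖m‖ ^ 2 := by
    rw [hsum, real_inner_smul_left, real_inner_self_eq_norm_sq]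
  have h3 : ∑ i, ‖D i - m‖ ^ 2 = ∑ i, ‖D i‖ ^ 2 - (n : ℝ) * ‖m‖ ^ 2 := by
    have hexp : ∀ i ∈ (univ : Finset (Fin n)),
        ‖D i - m‖ ^ 2 = ‖D i‖ ^ 2 - 2 * inner ℝ (D i) m + ‖m‖ ^ 2 :=
      fun i _ => norm_sub_sq_real _ _
    rw [Finset.sum_congr rfl hexp, Finset.sum_add_distrib, Finset.sum_sub_distrib,
      ← Finset.mul_sum, ← sum_inner, h2, Finset.sum_const, card_univ, Fintype.card_fin,
      nsmul_eq_mul]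
    ring
  rw [h3]
  have : 0 ≤ (n : ℝ) * ‖m‖ ^ 2 := by positivity
  linarith

private lemma scalarB {ρ a b : ℝ} (hρ0 : 0 ≤ ρ) (hρ1 : ρ < 1) (ha : 0 ≤ a) (hb : 0 ≤ b) :
    (ρ * a + b) ^ 2 ≤ (1 + ρ) / 2 * a ^ 2 + (1 + ρ ^ 2) / (1 - ρ ^ 2) * b ^ 2 := by
  have h1 : 0 < 1 - ρ ^ 2 := by nlinarith
  rw [show (1 + ρ) / 2 * a ^ 2 + (1 + ρ ^ 2) / (1 - ρ ^ 2) * b ^ 2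
      = ((1 + ρ) * (1 - ρ ^ 2) * a ^ 2 + 2 * (1 + ρ ^ 2) * b ^ 2) / (2 * (1 - ρ ^ 2)) from by
    field_simp]
  rw [le_div_iff₀ (by positivity)]
  nlinarith [mul_nonneg (by linarith : (0:ℝ) ≤ 1 + ρ)
      (sq_nonneg ((1 + ρ - 2 * ρ ^ 2) * a - 2 * ρ * b)),
    mul_nonneg (mul_nonneg (mul_nonneg hρ0 hρ0) hρ0) (sq_nonneg b),
    (by linarith : (0:ℝ) < 1 + 2 * ρ)]

private lemma pointA {ρ η A B : ℝ} (hρ0 : 0 ≤ ρ) (hρ1 : ρ < 1) (hη : 0 ≤ η)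
    (hA : 0 ≤ A) (hB : 0 ≤ B) :
    ρ ^ 2 * (A + η * B) ^ 2
      ≤ (1 + ρ) / 2 * A ^ 2 + η ^ 2 * ((1 + ρ ^ 2) / (1 - ρ ^ 2)) * B ^ 2 := by
  have h1 : 0 < 1 - ρ ^ 2 := by nlinarith
  have h := scalarB hρ0 hρ1 hA (mul_nonneg (mul_nonneg hρ0 hη) hB)
  have key : (1 + ρ ^ 2) / (1 - ρ ^ 2) * (ρ * η * B) ^ 2
      ≤ η ^ 2 * ((1 + ρ ^ 2) / (1 - ρ ^ 2)) * B ^ 2 := by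
    have hco : 0 ≤ (1 + ρ ^ 2) / (1 - ρ ^ 2) := by positivity
    have h3 : (ρ * η * B) ^ 2 ≤ η ^ 2 * B ^ 2 := by nlinarith [sq_nonneg (η * B)]
    nlinarith [mul_le_mul_of_nonneg_left h3 hco]
  calc ρ ^ 2 * (A + η * B) ^ 2 = (ρ * A + ρ * η * B) ^ 2 := by ring
    _ ≤ (1 + ρ) / 2 * A ^ 2 + (1 + ρ ^ 2) / (1 - ρ ^ 2) * (ρ * η * B) ^ 2 := h
    _ ≤ _ := by linarith

theorem dsgt_one_step_consensus
    (d n : ℕ) (hn : 0 < n)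
    (W : Matrix (Fin n) (Fin n) ℝ) (hWsymm : W.IsSymm)
    (hWrow : ∀ i, ∑ j, W i j = 1)
    (ρ : ℝ) (hρ1 : ρ < 1)
    (hspec : ∀ a : EuclideanSpace ℝ (Fin n),
      ‖(show EuclideanSpace ℝ (Fin n) from
          WithLp.toLp 2 (fun i => (∑ j, W i j * a j) - (∑ j, a j) / n))‖ ≤ ρ * ‖a‖)
    (X U : Fin n → EuclideanSpace ℝ (Fin d)) (η : ℝ) (hη : 0 ≤ η) :
    (∑ i, ‖(∑ j, W i j • (X j - η • U j))
          - (n : ℝ)⁻¹ • ∑ k, ∑ j, W k j • (X j - η • U j)‖ ^ 2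
        ≤ ((1 + ρ) / 2) * ∑ i, ‖X i - (n : ℝ)⁻¹ • ∑ j, X j‖ ^ 2
          + η ^ 2 * ((1 + ρ ^ 2) / (1 - ρ ^ 2)) * ∑ i, ‖U i - (n : ℝ)⁻¹ • ∑ j, U j‖ ^ 2)
      ∧ ∀ D : Fin n → EuclideanSpace ℝ (Fin d),
        ∑ i, ‖((∑ j, W i j • U j) + D i)
            - (n : ℝ)⁻¹ • ∑ k, ((∑ j, W k j • U j) + D k)‖ ^ 2
          ≤ ((1 + ρ) / 2) * ∑ i, ‖U i - (n : ℝ)⁻¹ • ∑ j, U j‖ ^ 2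
            + ((1 + ρ ^ 2) / (1 - ρ ^ 2)) * ∑ i, ‖D i‖ ^ 2 := by
  have hρ0 : 0 ≤ ρ := by
    have h := (norm_nonneg _).trans (hspec (EuclideanSpace.single ⟨0, hn⟩ 1))
    rw [EuclideanSpace.norm_single, norm_one, mul_one] at h
    exact h
  have h1ρ2 : 0 < 1 - ρ ^ 2 := by nlinarith
  have hWcol : ∀ j, ∑ i, W i j = 1 := fun j => by
    simp_rw [fun i => hWsymm.apply j i]
    exact hWrow j
  have hmean : ∀ V : Fin n → EuclideanSpace ℝ (Fin d),
      ∑ k, ∑ j, W k j • V j = ∑ j, V j := by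
    intro V
    rw [Finset.sum_comm]
    exact Finset.sum_congr rfl fun j _ => by rw [← Finset.sum_smul, hWcol, one_smul]
  constructor
  · -- part (i)
    rw [hmean fun j => X j - η • U j]
    have hc := contract hn W hWrow ρ hρ0 hspec (fun j => X j - η • U j)
    have hsplit : ∀ i : Fin n, (X i - η • U i) - (n : ℝ)⁻¹ • ∑ j, (X j - η • U j)
        = (X i - (n : ℝ)⁻¹ • ∑ j, X j) - η • (U i - (n : ℝ)⁻¹ • ∑ j, U j) := by
      intro i
      rw [Finset.sum_sub_distrib, ← Finset.smul_sum]
      module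
    calc ∑ i, ‖(∑ j, W i j • (X j - η • U j)) - (n : ℝ)⁻¹ • ∑ j, (X j - η • U j)‖ ^ 2
        ≤ ρ ^ 2 * ∑ i, ‖(X i - η • U i) - (n : ℝ)⁻¹ • ∑ j, (X j - η • U j)‖ ^ 2 := hc
      _ = ∑ i, ρ ^ 2 * ‖(X i - (n : ℝ)⁻¹ • ∑ j, X j)
            - η • (U i - (n : ℝ)⁻¹ • ∑ j, U j)‖ ^ 2 := by
          rw [Finset.mul_sum]
          exact Finset.sum_congr rfl fun i _ => by rw [hsplit i]
      _ ≤ ∑ i, ((1 + ρ) / 2 * ‖X i - (n : ℝ)⁻¹ • ∑ j, X j‖ ^ 2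
            + η ^ 2 * ((1 + ρ ^ 2) / (1 - ρ ^ 2)) * ‖U i - (n : ℝ)⁻¹ • ∑ j, U j‖ ^ 2) := by
          refine Finset.sum_le_sum fun i _ => ?_
          have htri : ‖(X i - (n : ℝ)⁻¹ • ∑ j, X j) - η • (U i - (n : ℝ)⁻¹ • ∑ j, U j)‖
              ≤ ‖X i - (n : ℝ)⁻¹ • ∑ j, X j‖ + η * ‖U i - (n : ℝ)⁻¹ • ∑ j, U j‖ := by
            refine (norm_sub_le _ _).trans ?_
            rw [norm_smul, Real.norm_eq_abs, abs_of_nonneg hη]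
          calc ρ ^ 2 * ‖(X i - (n : ℝ)⁻¹ • ∑ j, X j) - η • (U i - (n : ℝ)⁻¹ • ∑ j, U j)‖ ^ 2
              ≤ ρ ^ 2 * (‖X i - (n : ℝ)⁻¹ • ∑ j, X j‖
                  + η * ‖U i - (n : ℝ)⁻¹ • ∑ j, U j‖) ^ 2 :=
                mul_le_mul_of_nonneg_left
                  (pow_le_pow_left₀ (norm_nonneg _) htri 2) (sq_nonneg ρ)
            _ ≤ _ := pointA hρ0 hρ1 hη (norm_nonneg _) (norm_nonneg _)
      _ = _ := by
          rw [Finset.sum_add_distrib, ← Finset.mul_sum, ← Finset.mul_sum]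
  · -- part (ii)
    intro D
    have hmean2 : ∑ k, ((∑ j, W k j • U j) + D k) = (∑ j, U j) + ∑ j, D j := by
      rw [Finset.sum_add_distrib, hmean U]
    rw [hmean2]
    set mU : EuclideanSpace ℝ (Fin d) := (n : ℝ)⁻¹ • ∑ j, U j with hmU
    set mD : EuclideanSpace ℝ (Fin d) := (n : ℝ)⁻¹ • ∑ j, D j with hmD
    set P : PiLp 2 (fun _ : Fin n => EuclideanSpace ℝ (Fin d)) :=
      WithLp.toLp 2 (fun i => (∑ j, W i j • U j) - mU) with hP
    set Q : PiLp 2 (fun _ : Fin n => EuclideanSpace ℝ (Fin d)) :=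
      WithLp.toLp 2 (fun i => D i - mD) with hQ
    have hterm : ∀ i : Fin n, ((∑ j, W i j • U j) + D i)
        - (n : ℝ)⁻¹ • ((∑ j, U j) + ∑ j, D j) = (P + Q) i := by
      intro i
      simp only [PiLp.add_apply, PiLp.toLp_apply, hP, hQ, hmU, hmD, smul_add]
      abel
    have hSu0 : 0 ≤ ∑ i, ‖U i - mU‖ ^ 2 :=
      Finset.sum_nonneg fun i _ => sq_nonneg _
    have hSD0 : 0 ≤ ∑ i, ‖D i‖ ^ 2 := Finset.sum_nonneg fun i _ => sq_nonneg _
    set su : ℝ := Real.sqrt (∑ i, ‖U i - mU‖ ^ 2) with hsu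
    set sd : ℝ := Real.sqrt (∑ i, ‖D i‖ ^ 2) with hsd
    have hPn : ‖P‖ ≤ ρ * su := by
      have h2 : ‖P‖ ^ 2 ≤ ρ ^ 2 * ∑ i, ‖U i - mU‖ ^ 2 := by
        rw [PiLp.norm_sq_eq_of_L2]
        exact contract hn W hWrow ρ hρ0 hspec U
      have := Real.sqrt_le_sqrt h2
      rwa [Real.sqrt_sq (norm_nonneg _), Real.sqrt_mul (sq_nonneg ρ),
        Real.sqrt_sq hρ0, ← hsu] at this
    have hQn : ‖Q‖ ≤ sd := by
      have h2 : ‖Q‖ ^ 2 ≤ ∑ i, ‖D i‖ ^ 2 := by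
        rw [PiLp.norm_sq_eq_of_L2]
        exact center_le hn D
      have := Real.sqrt_le_sqrt h2
      rwa [Real.sqrt_sq (norm_nonneg _), ← hsd] at this
    calc ∑ i, ‖((∑ j, W i j • U j) + D i) - (n : ℝ)⁻¹ • ((∑ j, U j) + ∑ j, D j)‖ ^ 2
        = ∑ i, ‖(P + Q) i‖ ^ 2 := Finset.sum_congr rfl fun i _ => by rw [hterm i]
      _ = ‖P + Q‖ ^ 2 := (PiLp.norm_sq_eq_of_L2 _ _).symm
      _ ≤ (‖P‖ + ‖Q‖) ^ 2 := pow_le_pow_left₀ (norm_nonneg _) (norm_add_le _ _) 2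
      _ ≤ (ρ * su + sd) ^ 2 :=
          pow_le_pow_left₀ (add_nonneg (norm_nonneg _) (norm_nonneg _))
            (add_le_add hPn hQn) 2
      _ ≤ (1 + ρ) / 2 * su ^ 2 + (1 + ρ ^ 2) / (1 - ρ ^ 2) * sd ^ 2 :=
          scalarB hρ0 hρ1 (Real.sqrt_nonneg _) (Real.sqrt_nonneg _)
      _ = _ := by rw [hsu, hsd, Real.sq_sqrt hSu0, Real.sq_sqrt hSD0]
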